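/- Let (f_1, …, f_10) be a 10-tuple of vectors in E₁₀ such that ⟨f_i, f_j⟩ = 1 − δ_ij for all i, j (i.e. ⟨f_i, f_i⟩ = 0 and ⟨f_i, f_j⟩ = 1 for i ≠ j). Then for each pair of indices i, j with 1 ≤ i ≠ j ≤ 10, there exists an isotropic vector e ∈ E₁₀ (that is, ⟨e, e⟩ = 0) such that ⟨e, f_i⟩ = ⟨e, f_j⟩ = 2 and ⟨e, f_k⟩ = 1 for every k ≠ i, j. (Lemma 2.4 / Cossec's Lemma.) -/

import Mathlib

open Matrix BigOperators

/-- The Gram matrix of the even unimodular hyperbolic lattice `E₁₀ = U ⊕ E₈(−1)`: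
indices 0,1 span the hyperbolic plane `U`, and indices 2,…,9 carry the negative
definite `E₈` form (diagonal `−2`, entry `1` for vertices adjacent in the `E₈`
Dynkin diagram). -/
def E10Gram : Matrix (Fin 10) (Fin 10) ℤ :=
  !![0, 1,  0,  0,  0,  0,  0,  0,  0,  0;
     1, 0,  0,  0,  0,  0,  0,  0,  0,  0;
     0, 0, -2,  1,  0,  0,  0,  0,  0,  0;
     0, 0,  1, -2,  1,  0,  0,  0,  0,  0;
     0, 0,  0,  1, -2,  1,  0,  0,  0,  1;
     0, 0,  0,  0,  1, -2,  1,  0,  0,  0;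
     0, 0,  0,  0,  0,  1, -2,  1,  0,  0;
     0, 0,  0,  0,  0,  0,  1, -2,  1,  0;
     0, 0,  0,  0,  0,  0,  0,  1, -2,  0;
     0, 0,  0,  0,  1,  0,  0,  0,  0, -2]

/-- The symmetric bilinear form on `E₁₀ = ℤ¹⁰` with Gram matrix `E10Gram`. -/
def E10Pair (v w : Fin 10 → ℤ) : ℤ := ∑ i, ∑ j, v i * E10Gram i j * w j

/-- The integer inverse of `E10Gram`. -/
def E10Inv : Matrix (Fin 10) (Fin 10) ℤ :=
  !![0,1,0,0,0,0,0,0,0,0;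
     1,0,0,0,0,0,0,0,0,0;
     0,0,-4,-7,-10,-8,-6,-4,-2,-5;
     0,0,-7,-14,-20,-16,-12,-8,-4,-10;
     0,0,-10,-20,-30,-24,-18,-12,-6,-15;
     0,0,-8,-16,-24,-20,-15,-10,-5,-12;
     0,0,-6,-12,-18,-15,-12,-8,-4,-9;
     0,0,-4,-8,-12,-10,-8,-6,-3,-6;
     0,0,-2,-4,-6,-5,-4,-3,-2,-3;
     0,0,-5,-10,-15,-12,-9,-6,-3,-8]

lemma E10_mul_inv : E10Gram * E10Inv = 1 := by decide
lemma E10_inv_mul : E10Inv * E10Gram = 1 := mul_eq_one_comm.mp E10_mul_inv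
lemma E10Gram_symm : ∀ i j, E10Gram i j = E10Gram j i := by
  intro i j; fin_cases i <;> fin_cases j <;> rfl

lemma E10Pair_eq (v w : Fin 10 → ℤ) : E10Pair v w = v ⬝ᵥ E10Gram *ᵥ w := by
  simp [E10Pair, dotProduct, mulVec, Finset.mul_sum, mul_assoc]

lemma E10Pair_comm (v w : Fin 10 → ℤ) : E10Pair v w = E10Pair w v := by
  rw [E10Pair, E10Pair, Finset.sum_comm]
  exact Finset.sum_congr rfl fun j _ => Finset.sum_congr rfl fun i _ => by
    rw [E10Gram_symm i j]; ring

lemma E10Pair_sub_left (u v w : Fin 10 → ℤ) :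
    E10Pair (u - v) w = E10Pair u w - E10Pair v w := by
  simp [E10Pair_eq, sub_dotProduct]

lemma E10Pair_sub_right (u v w : Fin 10 → ℤ) :
    E10Pair u (v - w) = E10Pair u v - E10Pair u w := by
  simp [E10Pair_eq, Matrix.mulVec_sub, dotProduct_sub]

lemma E10Pair_smul_right (c : ℤ) (v w : Fin 10 → ℤ) :
    E10Pair v (c • w) = c * E10Pair v w := by
  simp only [E10Pair, Pi.smul_apply, smul_eq_mul, Finset.mul_sum]
  exact Finset.sum_congr rfl fun i _ => Finset.sum_congr rfl fun j _ => by ring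

/- Auxiliary determinant lemma, stated over an abstract commutative ring so that
instance paths stay coherent (avoiding kernel blow-ups at concrete types). -/
lemma det_aux_main {n R : Type*} [Fintype n] [DecidableEq n] [CommRing R]
    (A G N H : Matrix n n R) (u v : n → R)
    (hH : A * G * Aᵀ = H)
    (hcol : H = 1 + Matrix.replicateCol Unit u * Matrix.replicateRow Unit v)
    (hN : G * N = 1) :
    A.det * A.det * G.det = 1 + v ⬝ᵥ u ∧ IsUnit G.det := by
  constructor
  · have h2 := congrArg Matrix.det hH
    rw [Matrix.det_mul, Matrix.det_mul, Matrix.det_transpose, hcol,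
      Matrix.det_one_add_replicateCol_mul_replicateRow] at h2
    linear_combination h2
  · exact IsUnit.of_mul_eq_one _ (by rw [← Matrix.det_mul, hN, Matrix.det_one])

lemma det_aux_adj {n R : Type*} [Fintype n] [DecidableEq n] [CommRing R] (A : Matrix n n R)
    (y w : n → R) (hy : A *ᵥ y = w) : A.det • y = A.adjugate *ᵥ w := by
  rw [← hy, Matrix.mulVec_mulVec, Matrix.adjugate_mul, Matrix.smul_mulVec,
    Matrix.one_mulVec]

/-- Cossec's Lemma: if `(f 0, …, f 9)` is a 10-tuple of vectors of `E₁₀` with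
`⟨f i, f j⟩ = 1 − δ_ij`, then for every pair of distinct indices `i ≠ j` there is an
isotropic vector `e` with `⟨e, f i⟩ = ⟨e, f j⟩ = 2` and `⟨e, f k⟩ = 1` for `k ≠ i, j`. -/
theorem cossec_lemma (f : Fin 10 → Fin 10 → ℤ)
    (hf : ∀ i j, E10Pair (f i) (f j) = 1 - if i = j then 1 else 0) :
    ∀ i j : Fin 10, i ≠ j → ∃ e : Fin 10 → ℤ,
      E10Pair e e = 0 ∧
      E10Pair e (f i) = 2 ∧
      E10Pair e (f j) = 2 ∧
      ∀ k : Fin 10, k ≠ i → k ≠ j → E10Pair e (f k) = 1 := by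
  intro i j hij
  set A : Matrix (Fin 10) (Fin 10) ℤ := Matrix.of f with hA
  set Jmat : Matrix (Fin 10) (Fin 10) ℤ := Matrix.of (fun _ _ => (1:ℤ)) with hJ
  set onev : Fin 10 → ℤ := fun _ => 1 with honev
  -- Gram relation
  have hH : A * E10Gram * Aᵀ = Jmat - 1 := by
    ext a b
    have h1 : (A * E10Gram * Aᵀ) a b = E10Pair (f a) (f b) := by
      rw [E10Pair]
      simp only [Matrix.mul_apply, Matrix.transpose_apply, Finset.sum_mul]
      rw [Finset.sum_comm]
      rfl
    rw [h1, hf a b]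
    simp [Matrix.sub_apply, Matrix.one_apply, hJ, honev]
  have hHneg : A * (-E10Gram) * Aᵀ = 1 - Jmat := by
    rw [Matrix.mul_neg, Matrix.neg_mul, hH]
    ext a b
    simp [Matrix.neg_apply, Matrix.sub_apply, Matrix.one_apply, hJ]
  have hcol : 1 - Jmat = 1 + Matrix.replicateCol Unit onev * Matrix.replicateRow Unit (fun _ => (-1:ℤ)) := by
    ext a b
    simp only [Matrix.sub_apply, Matrix.of_apply, Matrix.add_apply,
      Matrix.one_apply, Matrix.mul_apply, Matrix.replicateCol_apply, Matrix.replicateRow_apply,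
      Finset.univ_unique, Finset.sum_singleton, hJ, honev]
    split <;> ring
  have hNneg : (-E10Gram) * (-E10Inv) = 1 := by
    rw [Matrix.neg_mul, Matrix.mul_neg, neg_neg, E10_mul_inv]
  obtain ⟨hdetA2, hu⟩ :=
    det_aux_main A (-E10Gram) (-E10Inv) (1 - Jmat) onev (fun _ => (-1:ℤ)) hHneg hcol hNneg
  have hdot : (1:ℤ) + (fun _ => (-1:ℤ)) ⬝ᵥ onev = -9 := by
    simp [dotProduct, honev]
  have hdA : A.det = 3 ∨ A.det = -3 := by
    rw [hdot] at hdetA2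
    rcases Int.isUnit_iff.mp hu with h | h
    · exfalso; rw [h] at hdetA2; nlinarith [sq_nonneg A.det]
    · have h9 : A.det * A.det = 9 := by rw [h] at hdetA2; linarith
      have h0 : (A.det - 3) * (A.det + 3) = 0 := by linear_combination h9
      rcases mul_eq_zero.mp h0 with h' | h'
      · left; linarith
      · right; linarith
  -- opaque vectors
  obtain ⟨F, hFdef⟩ : ∃ v : Fin 10 → ℤ, Aᵀ *ᵥ onev = v := ⟨_, rfl⟩
  obtain ⟨y, hydef⟩ : ∃ v : Fin 10 → ℤ, E10Gram *ᵥ F = v := ⟨_, rfl⟩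
  have hAy : A *ᵥ y = fun _ => (9:ℤ) := by
    rw [← hydef, ← hFdef, Matrix.mulVec_mulVec, Matrix.mulVec_mulVec, hH]
    funext a
    simp [Matrix.mulVec, dotProduct, Matrix.sub_apply, Matrix.one_apply, hJ, honev,
      Finset.sum_sub_distrib]
  -- y is divisible by 3
  obtain ⟨z, hz⟩ : ∃ z : Fin 10 → ℤ, y = (3:ℤ) • z := by
    have h3 : A.det • y = A.adjugate *ᵥ (fun _ => (9:ℤ)) := det_aux_adj A y _ hAy
    have h9 : (fun _ : Fin 10 => (9:ℤ)) = (9:ℤ) • onev := funext fun m => by simp [honev]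
    rw [h9, Matrix.mulVec_smul] at h3
    rcases hdA with h | h
    · refine ⟨A.adjugate *ᵥ onev, funext fun m => ?_⟩
      have h4 := congrFun h3 m
      rw [h] at h4
      simp only [Pi.smul_apply, smul_eq_mul] at h4 ⊢
      omega
    · refine ⟨-(A.adjugate *ᵥ onev), funext fun m => ?_⟩
      have h4 := congrFun h3 m
      rw [h] at h4
      simp only [Pi.smul_apply, smul_eq_mul, Pi.neg_apply] at h4 ⊢
      omega
  obtain ⟨d, hddef⟩ : ∃ v : Fin 10 → ℤ, E10Inv *ᵥ z = v := ⟨_, rfl⟩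
  have hF3 : F = (3:ℤ) • d := by
    have h5 : E10Inv *ᵥ y = F := by
      rw [← hydef, Matrix.mulVec_mulVec, E10_inv_mul, Matrix.one_mulVec]
    rw [← h5, hz, Matrix.mulVec_smul, hddef]
  -- pairings
  have hpairkF : ∀ k, E10Pair (f k) F = 9 := by
    intro k
    rw [E10Pair_eq, hydef]
    exact congrFun hAy k
  have hpairFF : E10Pair F F = 90 := by
    rw [E10Pair_eq, hydef, ← hFdef, Matrix.mulVec_transpose, ← Matrix.dotProduct_mulVec, hAy]
    simp [dotProduct, honev]
  have hkd : ∀ k, E10Pair (f k) d = 3 := by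
    intro k
    have h6 := hpairkF k
    rw [hF3, E10Pair_smul_right] at h6
    linarith
  have hdk : ∀ k, E10Pair d (f k) = 3 := fun k => (E10Pair_comm d (f k)).trans (hkd k)
  have hdd : E10Pair d d = 10 := by
    have h7 := hpairFF
    rw [hF3, E10Pair_smul_right, E10Pair_comm, E10Pair_smul_right, E10Pair_comm] at h7
    linarith
  -- the isotropic vector
  have hie : E10Pair (f i) (d - f i - f j) = 2 := by
    rw [E10Pair_sub_right, E10Pair_sub_right, hkd i, hf i i, hf i j]
    simp [hij]
  have hje : E10Pair (f j) (d - f i - f j) = 2 := by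
    rw [E10Pair_sub_right, E10Pair_sub_right, hkd j, hf j i, hf j j]
    simp [hij.symm]
  refine ⟨d - f i - f j, ?_, ?_, ?_, ?_⟩
  · have hde : E10Pair d (d - f i - f j) = 4 := by
      rw [E10Pair_sub_right, E10Pair_sub_right, hdd, hdk i, hdk j]; ring
    rw [E10Pair_sub_left, E10Pair_sub_left, hde, hie, hje]
    ring
  · rw [E10Pair_sub_left, E10Pair_sub_left, hdk i, hf i i, hf j i]
    simp [hij.symm]
  · rw [E10Pair_sub_left, E10Pair_sub_left, hdk j, hf i j, hf j j]
    simp [hij]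
  · intro k hki hkj
    rw [E10Pair_sub_left, E10Pair_sub_left, hdk k, hf i k, hf j k]
    simp [Ne.symm hki, Ne.symm hkj]
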